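/- arXiv:2604.25738 — 6 statements merged into one kernel-verified Lean document; each statement's English description precedes it below -/
import Mathlib

section
/- The set of synchronous steady states of the single-machine infinite-bus system has exactly two elements if |P| < 1, exactly one element if |P| = 1, and is empty if |P| > 1, where P := (−λ²·ω_s·R + (T_m − K·ω_s)·(L²·ω_s² + R²)) / (λ·V_a·√(L²·ω_s² + R²)). -/
/-- The set of synchronous steady states of the single-machine
infinite-bus system has exactly two elements if `|P| < 1`, exactly one element if
`|P| = 1`, and is empty if `|P| > 1`. -/
theorem smib_steady_state_count
    (R L lam ωs Va K Tm : ℝ)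
    (hR : 0 < R) (hL : 0 < L) (hlam : 0 < lam) (hωs : 0 < ωs) (hVa : 0 < Va)
    (P : ℝ)
    (hP : P = (-lam ^ 2 * ωs * R + (Tm - K * ωs) * (L ^ 2 * ωs ^ 2 + R ^ 2)) /
      (lam * Va * Real.sqrt (L ^ 2 * ωs ^ 2 + R ^ 2)))
    (S : Set (ℂ × ℂ))
    (hS : S = {p : ℂ × ℂ | ‖p.1‖ = 1 ∧
      ((R : ℂ) + Complex.I * ωs * L) * p.2 = (Va : ℂ) - Complex.I * lam * ωs * p.1 ∧
      Tm - K * ωs = -lam * ((starRingEnd ℂ p.2) * (Complex.I * p.1)).re}) :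
    (|P| < 1 → S.ncard = 2) ∧ (|P| = 1 → S.ncard = 1) ∧ (1 < |P| → S = ∅) := by
  have hD : (0:ℝ) < L^2*ωs^2 + R^2 := by positivity
  set m := Real.sqrt (L ^ 2 * ωs ^ 2 + R ^ 2) with hm
  have hm0 : 0 < m := Real.sqrt_pos.mpr hD
  have hm2 : m^2 = L^2*ωs^2 + R^2 := Real.sq_sqrt hD.le
  set z : ℂ := (R:ℂ) + Complex.I * ωs * L with hzdef
  have hzre : z.re = R := by simp [hzdef]
  have hz0 : z ≠ 0 := by
    intro h; rw [h] at hzre; simp at hzre; linarith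
  have hnz : Complex.normSq z = R^2 + ωs^2*L^2 := by
    simp [hzdef, Complex.normSq_apply]; ring
  set c : ℂ := (↑(ωs*L/m) + ↑(R/m)*Complex.I : ℂ) with hc
  have hcre : c.re = ωs*L/m := by simp [hc]
  have hcim : c.im = R/m := by simp [hc]
  have hcnorm : Complex.normSq c = 1 := by
    rw [Complex.normSq_apply, hcre, hcim]
    field_simp
    linarith [hm2]
  have hc0 : c ≠ 0 := by
    intro h; rw [h] at hcnorm; simp at hcnorm
  have hcc : c * starRingEnd ℂ c = 1 := by
    rw [Complex.mul_conj, hcnorm]; norm_num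
  -- closed form for P*m
  have hPm : P * m = ((Tm - K*ωs)*(L^2*ωs^2+R^2) - lam^2*ωs*R)/(lam*Va) := by
    rw [hP]; field_simp; ring
  -- torque characterization
  have torque_iff : ∀ ξ I₀ : ℂ, ‖ξ‖ = 1 →
      z * I₀ = (Va:ℂ) - Complex.I*lam*ωs*ξ →
      (Tm - K*ωs = -lam * ((starRingEnd ℂ I₀) * (Complex.I * ξ)).re ↔
        ωs*L*ξ.re + R*ξ.im = P*m) := by
    intro ξ I₀ habs heq
    have hξ : ξ.re^2 + ξ.im^2 = 1 := by
      have := Complex.sq_norm ξ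
      rw [habs] at this
      rw [Complex.normSq_apply] at this
      nlinarith [this]
    have h1 : starRingEnd ℂ (z * I₀) * (Complex.I * ξ * z) =
        ((Complex.normSq z : ℝ) : ℂ) * ((starRingEnd ℂ I₀) * (Complex.I * ξ)) := by
      rw [map_mul, ← Complex.mul_conj]; ring
    rw [heq] at h1
    have h2 : ((starRingEnd ℂ ((Va:ℂ) - Complex.I*lam*ωs*ξ)) * (Complex.I*ξ*z)).re
        = -(Va*(ωs*L*ξ.re + R*ξ.im)) - lam*ωs*R := by
      simp [hzdef, Complex.mul_re, Complex.mul_im, Complex.sub_re, Complex.sub_im]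
      linear_combination (-(lam*ωs*R)) * hξ
    have h3 : (Complex.normSq z) * ((starRingEnd ℂ I₀) * (Complex.I * ξ)).re
        = -(Va*(ωs*L*ξ.re + R*ξ.im)) - lam*ωs*R := by
      rw [← h2, h1]
      simp [Complex.mul_re]
    rw [hnz] at h3
    have hden : R^2 + ωs^2*L^2 > 0 := by positivity
    constructor
    · intro h
      rw [hPm]
      have h4 : (Tm - K*ωs) * (R^2+ωs^2*L^2) = lam*(Va*(ωs*L*ξ.re + R*ξ.im)) + lam^2*ωs*R := by
        rw [h]; linear_combination (-lam) * h3
      rw [eq_div_iff (by positivity)]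
      linear_combination -h4
    · intro h
      have ht : lam*(Va*(ωs*L*ξ.re + R*ξ.im)) = (Tm - K*ωs)*(L^2*ωs^2+R^2) - lam^2*ωs*R := by
        rw [h, hPm]; field_simp
      have h6 : (R^2+ωs^2*L^2) * (Tm - K*ωs)
          = (R^2+ωs^2*L^2) * (-lam * ((starRingEnd ℂ I₀) * (Complex.I * ξ)).re) := by
        linear_combination lam * h3 - ht
      exact mul_left_cancel₀ hden.ne' h6
  -- the parametrizing map and set
  set f : ℂ → ℂ × ℂ := fun w => (c * w, ((Va:ℂ) - Complex.I*lam*ωs*(c*w))/z) with hf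
  have hfinj : Function.Injective f := by
    intro a b h
    have : c * a = c * b := congrArg Prod.fst h
    exact mul_left_cancel₀ hc0 this
  set U : Set ℂ := {w : ℂ | ‖w‖ = 1 ∧ w.re = P} with hU
  have hSU : S = f '' U := by
    ext p
    rw [hS]
    constructor
    · rintro ⟨habs, heq, htq⟩
      refine ⟨starRingEnd ℂ c * p.1, ⟨?_, ?_⟩, ?_⟩
      · simp [map_mul, habs]
        simp [Complex.norm_def, hcnorm]
      · -- real part condition
        have hre : (starRingEnd ℂ c * p.1).re = c.re * p.1.re + c.im * p.1.im := by
          simp [Complex.mul_re]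
        rw [hre, hcre, hcim]
        have := (torque_iff p.1 p.2 habs heq).mp htq
        field_simp
        linarith [this]
      · have hcw : c * (starRingEnd ℂ c * p.1) = p.1 := by
          rw [← mul_assoc, hcc, one_mul]
        rw [hf]
        simp only [hcw]
        have hp2 : ((Va:ℂ) - Complex.I*lam*ωs*p.1)/z = p.2 := by
          rw [← heq]
          exact mul_div_cancel_left₀ p.2 hz0
        rw [hp2]
    · rintro ⟨w, ⟨hwabs, hwre⟩, rfl⟩
      simp only [hf]
      have habs : ‖c * w‖ = 1 := by
        simp [map_mul, hwabs, Complex.norm_def, hcnorm]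
      have heq : z * (((Va:ℂ) - Complex.I*lam*ωs*(c*w))/z) = (Va:ℂ) - Complex.I*lam*ωs*(c*w) := by
        field_simp
      refine ⟨habs, heq, ?_⟩
      show Tm - K*ωs = -lam * ((starRingEnd ℂ (((Va:ℂ) - Complex.I*lam*ωs*(c*w))/z)) * (Complex.I*(c*w))).re
      rw [torque_iff (c*w) (((Va:ℂ) - Complex.I*lam*ωs*(c*w))/z) habs heq]
      have hre : (c*w).re = c.re * w.re - c.im * w.im := Complex.mul_re c w
      have him : (c*w).im = c.re * w.im + c.im * w.re := Complex.mul_im c w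
      rw [hre, him, hcre, hcim, hwre]
      field_simp
      linear_combination (-P) * hm2
  have hcard : S.ncard = U.ncard := by
    rw [hSU, Set.ncard_image_of_injective U hfinj]
  have habs_mk : ∀ x y : ℝ, x^2 + y^2 = 1 → ‖(⟨x, y⟩ : ℂ)‖ = 1 := by
    intro x y h
    rw [Complex.norm_def, Complex.normSq_mk]
    have : x * x + y * y = 1 := by linear_combination h
    rw [this]; exact Real.sqrt_one
  have hn1 : ∀ w : ℂ, ‖w‖ = 1 → w.re^2 + w.im^2 = 1 := by
    intro w h
    have h2 := Complex.sq_norm w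
    rw [h, Complex.normSq_apply] at h2
    linear_combination -h2
  refine ⟨?_, ?_, ?_⟩
  · intro hPlt
    have hs2 : 1 - P^2 > 0 := by
      have h1 : |P|^2 < 1 := by
        calc |P|^2 ≤ |P| * 1 := by rw [sq]; exact mul_le_mul_of_nonneg_left hPlt.le (abs_nonneg P)
        _ < 1 := by rw [mul_one]; exact hPlt
      rw [sq_abs] at h1; linarith
    set s := Real.sqrt (1 - P^2) with hs
    have hs0 : 0 < s := Real.sqrt_pos.mpr hs2
    have hssq : s^2 = 1 - P^2 := Real.sq_sqrt hs2.le
    have hUeq : U = {(⟨P, s⟩ : ℂ), (⟨P, -s⟩ : ℂ)} := by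
      ext w
      simp only [hU, Set.mem_setOf_eq, Set.mem_insert_iff, Set.mem_singleton_iff]
      constructor
      · rintro ⟨h1, h2⟩
        have hn := hn1 w h1
        have him : (w.im - s) * (w.im + s) = 0 := by
          rw [h2] at hn; linear_combination hn - hssq
        rcases mul_eq_zero.mp him with h | h
        · left; apply Complex.ext
          · simpa using h2
          · simp; linarith
        · right; apply Complex.ext
          · simpa using h2
          · simp; linarith
      · rintro (rfl | rfl)
        · exact ⟨habs_mk P s (by linear_combination hssq), rfl⟩
        · exact ⟨habs_mk P (-s) (by linear_combination hssq), rfl⟩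
    rw [hcard, hUeq]
    refine Set.ncard_pair ?_
    intro h
    have := congrArg Complex.im h
    simp only [] at this
    have : s = -s := this
    linarith
  · intro hPeq
    have hs2 : P^2 = 1 := by
      have h := sq_abs P
      rw [hPeq] at h
      linear_combination -h
    have hUeq : U = {(⟨P, 0⟩ : ℂ)} := by
      ext w
      simp only [hU, Set.mem_setOf_eq, Set.mem_singleton_iff]
      constructor
      · rintro ⟨h1, h2⟩
        have hn := hn1 w h1
        have him : w.im = 0 := by
          rw [h2] at hn
          have : w.im^2 = 0 := by linarith [hn, hs2]
          exact pow_eq_zero_iff (n := 2) (by norm_num) |>.mp this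
        apply Complex.ext
        · simpa using h2
        · simpa using him
      · rintro rfl
        exact ⟨habs_mk P 0 (by linear_combination hs2), rfl⟩
    rw [hcard, hUeq, Set.ncard_singleton]
  · intro hPgt
    rw [hSU]
    have hUeq : U = ∅ := by
      ext w
      simp only [hU, Set.mem_setOf_eq, Set.mem_empty_iff_false, iff_false]
      rintro ⟨h1, h2⟩
      have h3 := Complex.abs_re_le_norm w
      rw [h1, h2] at h3
      linarith
    rw [hUeq]
    simp
end

section
/- The matrix Q(ω̄) is positive definite if and only if K > J·ω̄ and K·ω̄² − λ·ω̄·a − λ²·ω̄²/(4R) − η²/(4(K − J·ω̄)) > 0. -/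
/-- The matrix `Q(ω̄)` is positive definite if and only if
`K > J·ω̄` and `K·ω̄² − λ·ω̄·a − λ²·ω̄²/(4R) − η²/(4(K − J·ω̄)) > 0`. -/
theorem Q_posdef_at_steady_state_iff
    (J K R L lam Tm ωb η a : ℝ)
    (hJ : 0 < J) (hK : 0 < K) (hR : 0 < R) (hL : 0 < L) (hlam : 0 < lam)
    (hTm : 0 < Tm) (hωb : 0 < ωb) (hη : 0 ≤ η) (ha : 0 ≤ a)
    (Q : ℝ → Matrix (Fin 3) (Fin 3) ℝ)
    (hQ : ∀ ω, Q ω = !![K - J * ωb, -η / 2, 0;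
                        -η / 2, K * ωb * ω - lam * ωb * a - Tm * (ω - ωb) / 2, -lam * ωb / 2;
                        0, -lam * ωb / 2, R]) :
    (∀ x : Fin 3 → ℝ, x ≠ 0 → 0 < dotProduct x ((Q ωb).mulVec x)) ↔
      (K > J * ωb ∧
        0 < K * ωb ^ 2 - lam * ωb * a - lam ^ 2 * ωb ^ 2 / (4 * R) -
          η ^ 2 / (4 * (K - J * ωb))) := by
  have hQb := hQ ωb
  have hform : ∀ x : Fin 3 → ℝ, dotProduct x ((Q ωb).mulVec x) =
      (K - J * ωb) * (x 0)^2 - η * x 0 * x 1 +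
      (K * ωb ^ 2 - lam * ωb * a) * (x 1)^2 - lam * ωb * x 1 * x 2 + R * (x 2)^2 := by
    intro x
    simp [hQb, dotProduct, Matrix.mulVec, Fin.sum_univ_three]
    ring
  constructor
  · intro h
    have hp : 0 < K - J * ωb := by
      have h0 := h ![1, 0, 0] (by
        intro hc
        have := congrFun hc 0
        simp at this)
      rw [hform] at h0
      simp at h0
      linarith
    refine ⟨by linarith, ?_⟩
    have h1 := h ![η / (2 * (K - J * ωb)), 1, lam * ωb / (2 * R)] (by
      intro hc
      have := congrFun hc 1
      simp at this)
    rw [hform] at h1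
    simp only [Matrix.cons_val_zero, Matrix.cons_val_one, Matrix.head_cons,
      Matrix.cons_val_two, Matrix.tail_cons] at h1
    have hp' : (K - J * ωb) ≠ 0 := ne_of_gt hp
    have hR' : R ≠ 0 := ne_of_gt hR
    have heq : (K - J * ωb) * (η / (2 * (K - J * ωb))) ^ 2 - η * (η / (2 * (K - J * ωb))) * 1 +
          (K * ωb ^ 2 - lam * ωb * a) * 1 ^ 2 -
        lam * ωb * 1 * (lam * ωb / (2 * R)) +
      R * (lam * ωb / (2 * R)) ^ 2 =
      K * ωb ^ 2 - lam * ωb * a - lam ^ 2 * ωb ^ 2 / (4 * R) - η ^ 2 / (4 * (K - J * ωb)) := by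
      field_simp
      ring
    linarith [heq ▸ h1]
  · rintro ⟨hp0, hc⟩
    have hp : 0 < K - J * ωb := by linarith
    -- clear denominators in hc
    have hc' : 0 < 4 * (K - J * ωb) * R * (K * ωb ^ 2 - lam * ωb * a)
        - R * η ^ 2 - (K - J * ωb) * (lam ^ 2 * ωb ^ 2) := by
      have h1 : lam ^ 2 * ωb ^ 2 / (4 * R) * (4 * (K - J * ωb) * R)
          = (K - J * ωb) * (lam ^ 2 * ωb ^ 2) := by
        field_simp
      have h2 : η ^ 2 / (4 * (K - J * ωb)) * (4 * (K - J * ωb) * R)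
          = R * η ^ 2 := by
        field_simp
      nlinarith [mul_pos (mul_pos (by linarith : (0:ℝ) < 4 * (K - J * ωb)) hR) hc]
    intro x hx
    rw [hform]
    obtain ⟨i, hi⟩ := Function.ne_iff.mp hx
    by_cases h1 : x 1 = 0
    · have : x 0 ≠ 0 ∨ x 2 ≠ 0 := by
        fin_cases i <;> simp_all <;> tauto
      rw [h1]
      rcases this with h0 | h2
      · nlinarith [sq_nonneg (x 2), sq_pos_of_ne_zero h0]
      · nlinarith [sq_nonneg (x 0), sq_pos_of_ne_zero h2]
    · have hx1 : 0 < (x 1)^2 := by positivity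
      have key : 4 * (K - J * ωb) * R *
          ((K - J * ωb) * (x 0)^2 - η * x 0 * x 1 +
          (K * ωb ^ 2 - lam * ωb * a) * (x 1)^2 - lam * ωb * x 1 * x 2 + R * (x 2)^2) =
          R * (2 * (K - J * ωb) * x 0 - η * x 1)^2 +
          (K - J * ωb) * (2 * R * x 2 - lam * ωb * x 1)^2 +
          (4 * (K - J * ωb) * R * (K * ωb ^ 2 - lam * ωb * a)
            - R * η ^ 2 - (K - J * ωb) * (lam ^ 2 * ωb ^ 2)) * (x 1)^2 := by
        ring
      have a1 := mul_nonneg hR.le (sq_nonneg (2 * (K - J * ωb) * x 0 - η * x 1))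
      have a2 := mul_nonneg hp.le (sq_nonneg (2 * R * x 2 - lam * ωb * x 1))
      have a3 := mul_pos hc' hx1
      have h4 : 0 < 4 * (K - J * ωb) * R := by positivity
      have pos : 0 < 4 * (K - J * ωb) * R *
          ((K - J * ωb) * (x 0)^2 - η * x 0 * x 1 +
          (K * ωb ^ 2 - lam * ωb * a) * (x 1)^2 - lam * ωb * x 1 * x 2 + R * (x 2)^2) := by
        rw [key]; linarith
      exact (mul_pos_iff_of_pos_left h4).mp pos
end

section
/- Assume K > J·ω̄. Then for any ω ∈ ℝ, the matrix Q(ω) is positive definite if and only if 0 < (K·ω̄ − T_m/2)·(ω − ω̄) + K·ω̄² − λ·ω̄·a − λ²·ω̄²/(4R) − η²/(4(K − J·ω̄)). -/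
/-- Assuming `K > J·ω̄`, the matrix `Q(ω)` is positive definite if and
only if `0 < (K·ω̄ − T_m/2)·(ω − ω̄) + K·ω̄² − λ·ω̄·a − λ²·ω̄²/(4R) − η²/(4(K − J·ω̄))`. -/
theorem Q_posdef_iff_affine_condition
    (J K R L lam Tm ωb η a : ℝ)
    (hJ : 0 < J) (hK : 0 < K) (hR : 0 < R) (hL : 0 < L) (hlam : 0 < lam)
    (hTm : 0 < Tm) (hωb : 0 < ωb) (hη : 0 ≤ η) (ha : 0 ≤ a)
    (Q : ℝ → Matrix (Fin 3) (Fin 3) ℝ)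
    (hQ : ∀ ω, Q ω = !![K - J * ωb, -η / 2, 0;
                        -η / 2, K * ωb * ω - lam * ωb * a - Tm * (ω - ωb) / 2, -lam * ωb / 2;
                        0, -lam * ωb / 2, R])
    (hKJ : K > J * ωb) :
    ∀ ω : ℝ,
      (∀ x : Fin 3 → ℝ, x ≠ 0 → 0 < dotProduct x ((Q ω).mulVec x)) ↔
        0 < (K * ωb - Tm / 2) * (ω - ωb) + K * ωb ^ 2 - lam * ωb * a -
          lam ^ 2 * ωb ^ 2 / (4 * R) - η ^ 2 / (4 * (K - J * ωb)) := by
  intro ω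
  have hA : (0:ℝ) < K - J * ωb := sub_pos.mpr hKJ
  set c : ℝ := (K * ωb - Tm / 2) * (ω - ωb) + K * ωb ^ 2 - lam * ωb * a -
      lam ^ 2 * ωb ^ 2 / (4 * R) - η ^ 2 / (4 * (K - J * ωb)) with hc
  clear_value c
  have hform : ∀ x : Fin 3 → ℝ,
      dotProduct x ((Q ω).mulVec x) =
        (K - J * ωb) * (x 0 - η * x 1 / (2 * (K - J * ωb)))^2
        + R * (x 2 - lam * ωb * x 1 / (2 * R))^2 + c * (x 1)^2 := by
    intro x
    rw [hQ]
    simp [dotProduct, Matrix.mulVec, Fin.sum_univ_three, hc]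
    field_simp
    ring
  constructor
  · intro h
    have hne : (![η / (2 * (K - J * ωb)), 1, lam * ωb / (2 * R)] : Fin 3 → ℝ) ≠ 0 := by
      intro h0
      have := congrFun h0 1
      simp at this
    have key := h _ hne
    rw [hform] at key
    have e1 : (η / (2 * (K - J * ωb)) - η * 1 / (2 * (K - J * ωb))) = 0 := by ring
    have e2 : (lam * ωb / (2 * R) - lam * ωb * 1 / (2 * R)) = 0 := by ring
    simpa [e1, e2] using key
  · intro hcpos x hx
    rw [hform x]
    have t1 : 0 ≤ (K - J * ωb) * (x 0 - η * x 1 / (2 * (K - J * ωb)))^2 := by positivity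
    have t2 : 0 ≤ R * (x 2 - lam * ωb * x 1 / (2 * R))^2 := by positivity
    by_cases h1 : x 1 = 0
    · have hor : x 0 ≠ 0 ∨ x 2 ≠ 0 := by
        by_contra hcon
        push_neg at hcon
        apply hx
        funext i
        fin_cases i <;> simp [hcon.1, hcon.2, h1]
      rcases hor with h0 | h2
      · have : 0 < (K - J * ωb) * (x 0 - η * x 1 / (2 * (K - J * ωb)))^2 := by
          have : x 0 - η * x 1 / (2 * (K - J * ωb)) = x 0 := by simp [h1]
          rw [this]
          positivity
        nlinarith [sq_nonneg (x 1)]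
      · have : 0 < R * (x 2 - lam * ωb * x 1 / (2 * R))^2 := by
          have : x 2 - lam * ωb * x 1 / (2 * R) = x 2 := by simp [h1]
          rw [this]
          positivity
        nlinarith [sq_nonneg (x 1)]
    · have t3 : 0 < c * (x 1)^2 := by positivity
      linarith
end

section
/- Assume K > J·ω̄, K̂ := K − λ·a/ω̄ − λ²/(4R) − η²/(4(K·ω̄² − J·ω̄³)) > 0, and 1 − K·ω̄/T_m < 1/2. Define ρ := K̂·ω̄²/(K·ω̄ − T_m/2). Then for every ω ∈ ℝ with ω > ω̄ − ρ, the matrix Q(ω) is positive definite. -/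
set_option maxHeartbeats 1000000 in
/-- Under Assumption 1, `Q(ω)` is positive definite for every
`ω > ω̄ − ρ` with `ρ := K̂·ω̄²/(K·ω̄ − T_m/2)`. -/
theorem Q_posdef_above_threshold
    (J K R L lam Tm ωb η a : ℝ)
    (hJ : 0 < J) (hK : 0 < K) (hR : 0 < R) (hL : 0 < L) (hlam : 0 < lam)
    (hTm : 0 < Tm) (hωb : 0 < ωb) (hη : 0 ≤ η) (ha : 0 ≤ a)
    (Q : ℝ → Matrix (Fin 3) (Fin 3) ℝ)
    (hQ : ∀ ω, Q ω = !![K - J * ωb, -η / 2, 0;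
                        -η / 2, K * ωb * ω - lam * ωb * a - Tm * (ω - ωb) / 2, -lam * ωb / 2;
                        0, -lam * ωb / 2, R])
    (hKJ : K > J * ωb)
    (Khat : ℝ)
    (hKhat : Khat = K - lam * a / ωb - lam ^ 2 / (4 * R) -
      η ^ 2 / (4 * (K * ωb ^ 2 - J * ωb ^ 3)))
    (hKhatpos : 0 < Khat)
    (hc : 1 - K * ωb / Tm < 1 / 2)
    (ρ : ℝ) (hρ : ρ = Khat * ωb ^ 2 / (K * ωb - Tm / 2)) :
    ∀ ω : ℝ, ω > ωb - ρ →
      ∀ x : Fin 3 → ℝ, x ≠ 0 → 0 < dotProduct x ((Q ω).mulVec x) := by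
  intro ω hω x hx
  have hA : 0 < K - J * ωb := by linarith
  have hKT : 0 < K * ωb - Tm / 2 := by
    have h : 1 / 2 < K * ωb / Tm := by linarith
    have h2 := (lt_div_iff₀ hTm).mp h
    linarith
  have hden : K * ωb ^ 2 - J * ωb ^ 3 = ωb ^ 2 * (K - J * ωb) := by ring
  have hKhat2 : Khat * ωb ^ 2 = K * ωb ^ 2 - lam * a * ωb
      - lam ^ 2 * ωb ^ 2 / (4 * R) - η ^ 2 / (4 * (K - J * ωb)) := by
    rw [hKhat, hden]
    field_simp
  have hρ2 : ρ * (K * ωb - Tm / 2) = Khat * ωb ^ 2 := by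
    rw [hρ, div_mul_cancel₀ _ (ne_of_gt hKT)]
  have hc1 : 0 < K * ωb * ω - lam * ωb * a - Tm * (ω - ωb) / 2
      - η ^ 2 / (4 * (K - J * ωb)) - lam ^ 2 * ωb ^ 2 / (4 * R) := by
    have hid : K * ωb * ω - lam * ωb * a - Tm * (ω - ωb) / 2
        - η ^ 2 / (4 * (K - J * ωb)) - lam ^ 2 * ωb ^ 2 / (4 * R)
        = (K * ωb - Tm / 2) * (ω - (ωb - ρ)) := by
      nlinarith [hKhat2, hρ2]
    rw [hid]
    exact mul_pos hKT (by linarith)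
  have hc2 : 0 < 4 * (K - J * ωb) * R *
      (K * ωb * ω - lam * ωb * a - Tm * (ω - ωb) / 2)
      - R * η ^ 2 - (K - J * ωb) * lam ^ 2 * ωb ^ 2 := by
    have h := mul_pos (show (0:ℝ) < 4 * (K - J * ωb) * R by positivity) hc1
    have e : 4 * (K - J * ωb) * R *
        (K * ωb * ω - lam * ωb * a - Tm * (ω - ωb) / 2
          - η ^ 2 / (4 * (K - J * ωb)) - lam ^ 2 * ωb ^ 2 / (4 * R))
        = 4 * (K - J * ωb) * R *
      (K * ωb * ω - lam * ωb * a - Tm * (ω - ωb) / 2)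
      - R * η ^ 2 - (K - J * ωb) * lam ^ 2 * ωb ^ 2 := by
      field_simp
    linarith [e ▸ h]
  obtain ⟨i, hi⟩ : ∃ i, x i ≠ 0 := by
    by_contra h; push_neg at h; exact hx (funext h)
  rw [hQ]
  simp [dotProduct, Matrix.mulVec, Fin.sum_univ_three, Matrix.cons_val_zero,
    Matrix.cons_val_one, Matrix.head_cons, Matrix.cons_val_two, Matrix.tail_cons]
  set x0 := x 0 with hx0; set x1 := x 1 with hx1d; set x2 := x 2 with hx2d
  by_cases h1 : x1 = 0
  · have hor : x0 ≠ 0 ∨ x2 ≠ 0 := by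
      fin_cases i <;> simp_all <;> tauto
    rw [h1]
    rcases hor with h | h
    · have h0 : 0 < x0 ^ 2 := lt_of_le_of_ne (sq_nonneg x0) (by simpa using (pow_ne_zero 2 h).symm)
      nlinarith [sq_nonneg x2, mul_pos hA h0, mul_nonneg hR.le (sq_nonneg x2)]
    · have h0 : 0 < x2 ^ 2 := lt_of_le_of_ne (sq_nonneg x2) (by simpa using (pow_ne_zero 2 h).symm)
      nlinarith [sq_nonneg x0, mul_pos hR h0, mul_nonneg hA.le (sq_nonneg x0)]
  · have h0 : 0 < x1 ^ 2 := lt_of_le_of_ne (sq_nonneg x1) (by simpa using (pow_ne_zero 2 h1).symm)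
    nlinarith [mul_nonneg hR.le (sq_nonneg (2 * (K - J * ωb) * x0 - η * x1)),
      mul_nonneg hA.le (sq_nonneg (2 * R * x2 - lam * ωb * x1)),
      mul_pos hc2 h0, mul_pos hA hR]
end

section
/- Let J, λ, ω̄, η ∈ ℝ with J ≥ 0, λ ≥ 0, ω̄ ≥ 0, η ≥ 0, let ω ∈ ℝ, let I, Ī ∈ ℂ, and let ξ, ξ̄ ∈ ℂ with |ξ| = 1 and |ξ̄| = 1. Set p := Re(conj(ξ)·(i·ξ̄)) and T := J·(ω − ω̄)·ω·ω̄·p + λ·ω̄·Re(conj(I)·ξ)·p − λ·ω·Re(conj(Ī)·ξ̄)·p. Then T ≤ −(η − J·ω̄² + λ·Re(conj(Ī)·ξ̄))·(ω − ω̄)·p + η·|ω − ω̄|·|ξ − ξ̄| + J·ω̄·(ω − ω̄)² + λ·ω̄·|I − Ī|·|ξ − ξ̄| + λ·ω̄·|Ī|·|ξ − ξ̄|². -/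
/-- Bound on the residual coupling term `T` in the shifted energy
balance. -/
theorem coupling_term_bound (J lam ωb η : ℝ)
    (hJ : 0 ≤ J) (hlam : 0 ≤ lam) (hωb : 0 ≤ ωb) (hη : 0 ≤ η)
    (ω : ℝ) (I Ib ξ ξb : ℂ)
    (hξ : ‖ξ‖ = 1) (hξb : ‖ξb‖ = 1)
    (p T : ℝ)
    (hp : p = ((starRingEnd ℂ ξ) * (Complex.I * ξb)).re)
    (hT : T = J * (ω - ωb) * ω * ωb * p +
      lam * ωb * ((starRingEnd ℂ I) * ξ).re * p -
      lam * ω * ((starRingEnd ℂ Ib) * ξb).re * p) :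
    T ≤ -(η - J * ωb ^ 2 + lam * ((starRingEnd ℂ Ib) * ξb).re) * (ω - ωb) * p +
      η * |ω - ωb| * ‖ξ - ξb‖ +
      J * ωb * (ω - ωb) ^ 2 +
      lam * ωb * ‖I - Ib‖ * ‖ξ - ξb‖ +
      lam * ωb * ‖Ib‖ * ‖ξ - ξb‖ ^ 2 := by
  set d : ℝ := ‖ξ - ξb‖ with hd
  set a : ℝ := ((starRingEnd ℂ (I - Ib)) * ξ).re with ha
  set b : ℝ := ((starRingEnd ℂ Ib) * (ξ - ξb)).re with hb
  have hd0 : 0 ≤ d := norm_nonneg _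
  -- |p| ≤ 1
  have hp1 : |p| ≤ 1 := by
    rw [hp]
    calc |((starRingEnd ℂ ξ) * (Complex.I * ξb)).re|
        ≤ ‖(starRingEnd ℂ ξ) * (Complex.I * ξb)‖ := Complex.abs_re_le_norm _
      _ = 1 := by
          simp [map_mul, Complex.norm_conj, hξ, hξb]
  -- |p| ≤ d
  have hp2 : |p| ≤ d := by
    have h0 : ((starRingEnd ℂ ξ) * (Complex.I * ξ)).re = 0 := by
      simp [Complex.mul_re, Complex.mul_im]; ring
    have heq : p = ((starRingEnd ℂ ξ) * (Complex.I * (ξb - ξ))).re := by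
      rw [hp]
      have : (starRingEnd ℂ ξ) * (Complex.I * (ξb - ξ)) =
          (starRingEnd ℂ ξ) * (Complex.I * ξb) - (starRingEnd ℂ ξ) * (Complex.I * ξ) := by ring
      rw [this, Complex.sub_re, h0, sub_zero]
    rw [heq]
    calc |((starRingEnd ℂ ξ) * (Complex.I * (ξb - ξ))).re|
        ≤ ‖(starRingEnd ℂ ξ) * (Complex.I * (ξb - ξ))‖ := Complex.abs_re_le_norm _
      _ = ‖ξb - ξ‖ := by simp [map_mul, Complex.norm_conj, hξ]
      _ = d := by rw [hd, norm_sub_rev]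
  have haA : |a| ≤ ‖I - Ib‖ := by
    calc |a| ≤ ‖(starRingEnd ℂ (I - Ib)) * ξ‖ := Complex.abs_re_le_norm _
      _ = ‖I - Ib‖ := by rw [norm_mul, hξ, mul_one, Complex.norm_conj]
  have hbB : |b| ≤ ‖Ib‖ * d := by
    calc |b| ≤ ‖(starRingEnd ℂ Ib) * (ξ - ξb)‖ := Complex.abs_re_le_norm _
      _ = ‖Ib‖ * d := by rw [norm_mul, Complex.norm_conj, hd]
  -- split the Re difference
  have hre : ((starRingEnd ℂ I) * ξ).re - ((starRingEnd ℂ Ib) * ξb).re = a + b := by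
    have hc : (starRingEnd ℂ I) * ξ - (starRingEnd ℂ Ib) * ξb =
        (starRingEnd ℂ (I - Ib)) * ξ + (starRingEnd ℂ Ib) * (ξ - ξb) := by
      rw [map_sub]; ring
    have := congrArg Complex.re hc
    simpa [Complex.sub_re, Complex.add_re, ha, hb] using this
  -- product bounds
  have h1 : p * (ω - ωb) ^ 2 ≤ (ω - ωb) ^ 2 := by
    nlinarith [sq_nonneg (ω - ωb), abs_le.mp hp1]
  have h2 : (ω - ωb) * p ≤ |ω - ωb| * d := by
    calc (ω - ωb) * p ≤ |(ω - ωb) * p| := le_abs_self _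
      _ = |ω - ωb| * |p| := abs_mul _ _
      _ ≤ |ω - ωb| * d := mul_le_mul_of_nonneg_left hp2 (abs_nonneg _)
  have h3 : a * p ≤ ‖I - Ib‖ * d := by
    calc a * p ≤ |a * p| := le_abs_self _
      _ = |a| * |p| := abs_mul _ _
      _ ≤ ‖I - Ib‖ * d :=
          mul_le_mul haA hp2 (abs_nonneg _) (norm_nonneg _)
  have h4 : b * p ≤ ‖Ib‖ * d * d := by
    calc b * p ≤ |b * p| := le_abs_self _
      _ = |b| * |p| := abs_mul _ _
      _ ≤ ‖Ib‖ * d * d :=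
          mul_le_mul hbB hp2 (abs_nonneg _)
            (mul_nonneg (norm_nonneg _) hd0)
  -- rewrite T
  have hTeq : T = -(η - J * ωb ^ 2 + lam * ((starRingEnd ℂ Ib) * ξb).re) * (ω - ωb) * p +
      J * ωb * (p * (ω - ωb) ^ 2) + lam * ωb * (a * p) + lam * ωb * (b * p) +
      η * ((ω - ωb) * p) := by
    rw [hT]
    linear_combination (lam * ωb * p) * hre
  rw [hTeq]
  have hJw : 0 ≤ J * ωb := mul_nonneg hJ hωb
  have hlw : 0 ≤ lam * ωb := mul_nonneg hlam hωb
  nlinarith [mul_le_mul_of_nonneg_left h1 hJw, mul_le_mul_of_nonneg_left h2 hη,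
    mul_le_mul_of_nonneg_left h3 hlw, mul_le_mul_of_nonneg_left h4 hlw]
end

section
/- Let J, L, λ, η, ω̄ ∈ ℝ, let ξ̄, Ī ∈ ℂ with |ξ̄| = 1, and let δω, φ ∈ ℝ and z ∈ ℂ. Set ξ := exp(i·φ)·ξ̄, ω := ω̄ + δω, I := Ī + z, and r := η + λ·Re(conj(Ī)·ξ̄). Then (1/2)·J·|i·ω·ξ − i·ω̄·ξ̄|² + (1/2)·L·|I − Ī|² + (1/2)·(η − J·ω̄² + λ·Re(conj(Ī)·ξ̄))·|ξ − ξ̄|² = (1/2)·J·δω² + (J·ω̄·δω + r)·(1 − cos φ) + (1/2)·L·|z|². -/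
/-- The storage function in local coordinates
`(δω, φ, z)` on the manifold equals the quadratic-plus-angular expression. -/
theorem storage_local_coordinates (J L lam η ωb : ℝ) (ξb Ib : ℂ)
    (hξb : ‖ξb‖ = 1)
    (δω φ : ℝ) (z : ℂ)
    (ξ I : ℂ) (ω r : ℝ)
    (hξ : ξ = Complex.exp (Complex.I * φ) * ξb)
    (hω : ω = ωb + δω)
    (hI : I = Ib + z)
    (hr : r = η + lam * ((starRingEnd ℂ Ib) * ξb).re) :
    (1 / 2) * J * ‖Complex.I * ω * ξ - Complex.I * ωb * ξb‖ ^ 2 +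
      (1 / 2) * L * ‖I - Ib‖ ^ 2 +
      (1 / 2) * (η - J * ωb ^ 2 + lam * ((starRingEnd ℂ Ib) * ξb).re) *
        ‖ξ - ξb‖ ^ 2 =
    (1 / 2) * J * δω ^ 2 + (J * ωb * δω + r) * (1 - Real.cos φ) +
      (1 / 2) * L * ‖z‖ ^ 2 := by
  subst hξ hω hI hr
  have h1 : Complex.normSq ξb = 1 := by
    rw [← Complex.sq_norm, hξb]; norm_num
  simp only [Complex.normSq_apply] at h1
  have hs := Real.sin_sq_add_cos_sq φ
  rw [show Complex.I * (φ:ℂ) = (φ:ℂ) * Complex.I from mul_comm _ _, Complex.exp_mul_I]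
  have e3 : Ib + z - Ib = z := by ring
  rw [e3]
  have e1 : ‖Complex.I * ↑(ωb + δω) *
      ((Complex.cos φ + Complex.sin φ * Complex.I) * ξb) - Complex.I * ωb * ξb‖ ^ 2
      = δω ^ 2 + 2 * (ωb + δω) * ωb * (1 - Real.cos φ) := by
    rw [Complex.sq_norm]
    simp only [Complex.normSq_apply, Complex.add_re, Complex.add_im, Complex.sub_re,
      Complex.sub_im, Complex.mul_re, Complex.mul_im, Complex.I_re, Complex.I_im,
      Complex.ofReal_re, Complex.ofReal_im, Complex.cos_ofReal_re, Complex.sin_ofReal_re,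
      Complex.cos_ofReal_im, Complex.sin_ofReal_im]
    linear_combination ((ωb + δω)^2 * (ξb.re^2 + ξb.im^2)) * hs +
      ((ωb + δω)^2 - 2*(ωb + δω)*ωb*Real.cos φ + ωb^2) * h1
  have e2 : ‖(Complex.cos φ + Complex.sin φ * Complex.I) * ξb - ξb‖ ^ 2
      = 2 * (1 - Real.cos φ) := by
    rw [Complex.sq_norm]
    simp only [Complex.normSq_apply, Complex.add_re, Complex.add_im, Complex.sub_re,
      Complex.sub_im, Complex.mul_re, Complex.mul_im, Complex.I_re, Complex.I_im,
      Complex.ofReal_re, Complex.ofReal_im, Complex.cos_ofReal_re, Complex.sin_ofReal_re,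
      Complex.cos_ofReal_im, Complex.sin_ofReal_im]
    linear_combination (ξb.re^2 + ξb.im^2) * hs + (2 - 2*Real.cos φ) * h1
  rw [e1, e2]
  ring
end
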